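/- The kernel of the Laplacian matrix A(κ) of a directed graph (with positive edge labels) contains a vector with all entries strictly positive if and only if every connected component of the graph is strongly connected (i.e., the graph is weakly reversible). -/

import Mathlib

open Matrix

/-- The Laplacian matrix of a labelled digraph: `κ i j` is the label of the edge
`j → i` (and `0` if there is no such edge); the diagonal of `κ` is zero. -/
def Lap {d : ℕ} (κ : Fin d → Fin d → ℝ) : Matrix (Fin d) (Fin d) ℝ :=
  fun i j => if i = j then -(∑ ℓ, κ ℓ j) else κ i j

/-- `E i j` means the digraph has an edge `j → i` (matching the Laplacian convention
`a_{ij} = κ_{ij}` for the edge `j → i`).  `reach E a b` : `b` is reachable from `a`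
along directed edges. -/
def reach {d : ℕ} (E : Fin d → Fin d → Prop) (a b : Fin d) : Prop :=
  Relation.ReflTransGen (fun u v => E v u) a b

/-- Reachability in the underlying undirected graph. -/
def reachU {d : ℕ} (E : Fin d → Fin d → Prop) (a b : Fin d) : Prop :=
  Relation.ReflTransGen (fun u v => E v u ∨ E u v) a b

/-- κ is an admissible labelling for the edge set `E`: positive on edges, zero
elsewhere. -/
def Admissible {d : ℕ} (E : Fin d → Fin d → Prop) (κ : Fin d → Fin d → ℝ) : Prop :=
  ∀ i j, (E i j → 0 < κ i j) ∧ (¬ E i j → κ i j = 0)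

/-- `S` is a terminal strongly connected component of the digraph with edge set `E`. -/
def IsTermSCC {d : ℕ} (E : Fin d → Fin d → Prop) (S : Set (Fin d)) : Prop :=
  ∃ a, S = {b | reach E a b ∧ reach E b a} ∧ ∀ b, reach E a b → reach E b a

section AuxLemmas
variable {d : ℕ} {E : Fin d → Fin d → Prop} {κ : Fin d → Fin d → ℝ}

lemma knonneg (hκ : Admissible E κ) (i j : Fin d) : 0 ≤ κ i j := by
  by_cases h : E i j
  · exact le_of_lt ((hκ i j).1 h)
  · exact le_of_eq ((hκ i j).2 h).symm

lemma colsum_mem (hirr : ∀ i, ¬ E i i) (hκ : Admissible E κ)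
    (T : Finset (Fin d)) {j : Fin d} (hj : j ∈ T) :
    ∑ i ∈ T, Lap κ i j = -(∑ ℓ ∈ Tᶜ, κ ℓ j) := by
  have hjj : κ j j = 0 := (hκ j j).2 (hirr j)
  have h1 : ∑ i ∈ T, Lap κ i j = Lap κ j j + ∑ i ∈ T.erase j, κ i j := by
    rw [← Finset.add_sum_erase T _ hj]
    congr 1
    exact Finset.sum_congr rfl fun i hi => if_neg (Finset.ne_of_mem_erase hi)
  have h2 : ∑ ℓ, κ ℓ j = ∑ i ∈ T.erase j, κ i j + ∑ ℓ ∈ Tᶜ, κ ℓ j := by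
    rw [← Finset.sum_add_sum_compl T]
    congr 1
    rw [← Finset.add_sum_erase T _ hj, hjj, zero_add]
  rw [h1]
  have : Lap κ j j = -(∑ ℓ, κ ℓ j) := by simp [Lap]
  rw [this, h2]; ring

lemma key (hirr : ∀ i, ¬ E i i) (hκ : Admissible E κ)
    (w : Fin d → ℝ) (hw : Lap κ *ᵥ w = 0) (T : Finset (Fin d)) :
    ∑ j ∈ Tᶜ, w j * ∑ i ∈ T, κ i j = ∑ j ∈ T, w j * ∑ ℓ ∈ Tᶜ, κ ℓ j := by
  have h0 : ∑ i ∈ T, (Lap κ *ᵥ w) i = 0 := by rw [hw]; simp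
  have h1 : ∑ i ∈ T, (Lap κ *ᵥ w) i = ∑ j, (∑ i ∈ T, Lap κ i j) * w j := by
    simp only [Matrix.mulVec, dotProduct]
    rw [Finset.sum_comm]
    exact Finset.sum_congr rfl fun j _ => (Finset.sum_mul _ _ _).symm
  rw [h1, ← Finset.sum_add_sum_compl T] at h0
  have hA : ∑ j ∈ T, (∑ i ∈ T, Lap κ i j) * w j
      = ∑ j ∈ T, -(w j * ∑ ℓ ∈ Tᶜ, κ ℓ j) :=
    Finset.sum_congr rfl fun j hj => by rw [colsum_mem hirr hκ T hj]; ring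
  have hB : ∑ j ∈ Tᶜ, (∑ i ∈ T, Lap κ i j) * w j
      = ∑ j ∈ Tᶜ, w j * ∑ i ∈ T, κ i j := by
    refine Finset.sum_congr rfl fun j hj => ?_
    have : ∑ i ∈ T, Lap κ i j = ∑ i ∈ T, κ i j := by
      refine Finset.sum_congr rfl fun i hi => if_neg ?_
      rintro rfl
      exact (Finset.mem_compl.mp hj) hi
    rw [this]; ring
  rw [hA, hB, Finset.sum_neg_distrib] at h0
  linarith


lemma component_vec (hirr : ∀ i, ¬ E i i) (hκ : Admissible E κ)
    (h : ∀ a b, reachU E a b → reach E a b) (a : Fin d) :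
    ∃ w : Fin d → ℝ, 0 < w a ∧ (∀ i, 0 ≤ w i) ∧ Lap κ *ᵥ w = 0 := by
  classical
  set T : Finset (Fin d) := Finset.univ.filter (fun b => reach E a b) with hTdef
  have hmemT : ∀ b, b ∈ T ↔ reach E a b := by
    intro b; simp [hTdef]
  have haT : a ∈ T := (hmemT a).mpr Relation.ReflTransGen.refl
  have hfwd : ∀ j ∈ T, ∀ ℓ, E ℓ j → ℓ ∈ T := by
    intro j hj ℓ he
    exact (hmemT ℓ).mpr (((hmemT j).mp hj).tail he)
  have hbwd : ∀ j ∈ T, ∀ ℓ, E j ℓ → ℓ ∈ T := by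
    intro j hj ℓ he
    have h1 : reachU E a j :=
      Relation.ReflTransGen.mono (fun u v hh => Or.inl hh) _ _ ((hmemT j).mp hj)
    exact (hmemT ℓ).mpr (h a ℓ (h1.tail (Or.inr he)))
  have hcross : ∀ j ∈ T, ∀ ℓ ∈ Tᶜ, κ ℓ j = 0 := by
    intro j hj ℓ hℓ
    refine (hκ ℓ j).2 fun he => ?_
    exact (Finset.mem_compl.mp hℓ) (hfwd j hj ℓ he)
  -- restricted matrix
  set M : Matrix T T ℝ := fun i j => Lap κ i j with hMdef
  haveI : Nonempty T := ⟨⟨a, haT⟩⟩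
  have hone : (fun _ : T => (1:ℝ)) ᵥ* M = 0 := by
    funext j
    have : ∑ i : T, Lap κ (i:Fin d) (j:Fin d) = ∑ i ∈ T, Lap κ i j :=
      Finset.sum_coe_sort T (fun i => Lap κ i (j:Fin d))
    simp only [Matrix.vecMul, dotProduct, one_mul, hMdef]
    rw [this, colsum_mem hirr hκ T j.2]
    simp only [Pi.zero_apply, neg_eq_zero]
    exact Finset.sum_eq_zero fun ℓ hℓ => hcross j j.2 ℓ hℓ
  have hdet : M.det = 0 := by
    rw [← Matrix.exists_vecMul_eq_zero_iff]
    refine ⟨fun _ => (1:ℝ), ?_, hone⟩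
    intro hcon
    have := congrFun hcon (Classical.arbitrary T)
    norm_num at this
  obtain ⟨w0, hw0ne, hw0⟩ := Matrix.exists_mulVec_eq_zero_iff.mpr hdet
  set wf : Fin d → ℝ := fun i => if hi : i ∈ T then w0 ⟨i, hi⟩ else 0 with hwf
  have hwfT : ∀ (i : Fin d) (hi : i ∈ T), wf i = w0 ⟨i, hi⟩ := by
    intro i hi; simp [hwf, dif_pos hi]
  have hsupp : ∀ i ∉ T, wf i = 0 := by intro i hi; simp [hwf, dif_neg hi]
  have hker : Lap κ *ᵥ wf = 0 := by
    funext j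
    show ∑ k, Lap κ j k * wf k = 0
    rw [← Finset.sum_add_sum_compl T]
    have hc : ∑ k ∈ Tᶜ, Lap κ j k * wf k = 0 :=
      Finset.sum_eq_zero fun k hk => by
        rw [hsupp k (Finset.mem_compl.mp hk), mul_zero]
    rw [hc, add_zero]
    by_cases hj : j ∈ T
    · have h1 : ∑ k ∈ T, Lap κ j k * wf k = ∑ k : T, Lap κ j (k:Fin d) * w0 k := by
        rw [← Finset.sum_coe_sort T (fun k => Lap κ j k * wf k)]
        exact Finset.sum_congr rfl fun k _ => by rw [hwfT k k.2]
      rw [h1]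
      have := congrFun hw0 ⟨j, hj⟩
      simpa [Matrix.mulVec, dotProduct, hMdef] using this
    · refine Finset.sum_eq_zero fun k hk => ?_
      have hjk : j ≠ k := fun hh => hj (hh ▸ hk)
      have : Lap κ j k = κ j k := if_neg hjk
      rw [this, (hκ j k).2 fun he => hj (hfwd k hk j he), zero_mul]
  have hex : ∃ i0, ∃ hi0 : i0 ∈ T, wf i0 ≠ 0 := by
    obtain ⟨i0, hi0⟩ := Function.ne_iff.mp hw0ne
    exact ⟨i0, i0.2, by rw [hwfT i0 i0.2]; simpa using hi0⟩
  -- main positivity step, applied to wf or -wf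
  have main : ∀ w : Fin d → ℝ, Lap κ *ᵥ w = 0 → (∀ i ∉ T, w i = 0) →
      ∀ i0, i0 ∈ T → 0 < w i0 → ∃ v : Fin d → ℝ, 0 < v a ∧ (∀ i, 0 ≤ v i) ∧ Lap κ *ᵥ v = 0 := by
    intro w hw hws i0 hi0T hi0
    set P : Finset (Fin d) := T.filter (fun j => 0 < w j) with hPdef
    have hmemP : ∀ j, j ∈ P ↔ j ∈ T ∧ 0 < w j := by intro j; simp [hPdef]
    have hi0P : i0 ∈ P := (hmemP i0).mpr ⟨hi0T, hi0⟩
    have hkey := key hirr hκ w hw P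
    have hRHSnn : ∀ j ∈ P, 0 ≤ w j * ∑ ℓ ∈ Pᶜ, κ ℓ j := fun j hj =>
      mul_nonneg (le_of_lt ((hmemP j).mp hj).2)
        (Finset.sum_nonneg fun ℓ _ => knonneg hκ ℓ j)
    have hLHSnp : ∀ j ∈ Pᶜ, w j * ∑ i ∈ P, κ i j ≤ 0 := by
      intro j hj
      have hwj : w j ≤ 0 := by
        by_cases hjT : j ∈ T
        · by_contra hpos
          exact (Finset.mem_compl.mp hj) ((hmemP j).mpr ⟨hjT, lt_of_not_ge hpos⟩)
        · exact le_of_eq (hws j hjT)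
      exact mul_nonpos_of_nonpos_of_nonneg hwj
        (Finset.sum_nonneg fun i _ => knonneg hκ i j)
    have hRHS0 : ∑ j ∈ P, w j * ∑ ℓ ∈ Pᶜ, κ ℓ j = 0 := by
      have h1 : ∑ j ∈ P, w j * ∑ ℓ ∈ Pᶜ, κ ℓ j ≤ 0 := by
        rw [← hkey]; exact Finset.sum_nonpos hLHSnp
      have h2 : 0 ≤ ∑ j ∈ P, w j * ∑ ℓ ∈ Pᶜ, κ ℓ j :=
        Finset.sum_nonneg hRHSnn
      linarith
    have hPfwd : ∀ j ∈ P, ∀ ℓ, E ℓ j → ℓ ∈ P := by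
      intro j hj ℓ he
      by_contra hℓ
      have hterm := (Finset.sum_eq_zero_iff_of_nonneg hRHSnn).mp hRHS0 j hj
      have hwj : 0 < w j := ((hmemP j).mp hj).2
      have hsum : ∑ ℓ ∈ Pᶜ, κ ℓ j = 0 := by
        rcases mul_eq_zero.mp hterm with h' | h'
        · exact absurd h' (ne_of_gt hwj)
        · exact h'
      have hzero := (Finset.sum_eq_zero_iff_of_nonneg
        (fun ℓ _ => knonneg hκ ℓ j)).mp hsum ℓ (Finset.mem_compl.mpr hℓ)
      exact absurd hzero (ne_of_gt ((hκ ℓ j).1 he))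
    have hTP : ∀ b ∈ T, b ∈ P := by
      intro b hb
      have hrab : reach E a b := (hmemT b).mp hb
      have hrai0 : reach E a i0 := (hmemT i0).mp hi0T
      have hri0a : reach E i0 a := by
        apply h
        exact (@Relation.ReflTransGen.symmetric _ (fun u v : Fin d => E v u ∨ E u v) ⟨fun u v hh => hh.symm⟩).symm _ _
          (Relation.ReflTransGen.mono (fun u v hh => Or.inl hh) _ _ hrai0)
      have hr : reach E i0 b := hri0a.trans hrab
      clear hrab hb
      induction hr with
      | refl => exact hi0P
      | tail _ hstep ih => exact hPfwd _ ih _ hstep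
    refine ⟨w, ?_, ?_, hw⟩
    · exact ((hmemP a).mp (hTP a haT)).2
    · intro i
      by_cases hi : i ∈ T
      · exact le_of_lt ((hmemP i).mp (hTP i hi)).2
      · exact le_of_eq (hws i hi).symm
  obtain ⟨i0, hi0T, hi0⟩ := hex
  rcases lt_or_gt_of_ne hi0 with hneg | hpos
  · refine main (-wf) ?_ (fun i hi => by simp [hsupp i hi]) i0 hi0T (by simpa using hneg)
    rw [Matrix.mulVec_neg, hker, neg_zero]
  · exact main wf hker hsupp i0 hi0T hpos
end AuxLemmas

/-- The kernel of the Laplacian of a digraph (with positive edge labels) contains a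
vector with all entries strictly positive if and only if the graph is weakly
reversible, i.e. every connected component is strongly connected. -/
theorem ker_Lap_pos_iff_weaklyReversible {d : ℕ} (E : Fin d → Fin d → Prop)
    (hirr : ∀ i, ¬ E i i) (κ : Fin d → Fin d → ℝ) (hκ : Admissible E κ) :
    (∃ v : Fin d → ℝ, (∀ i, 0 < v i) ∧ Lap κ *ᵥ v = 0) ↔
      (∀ a b, reachU E a b → reach E a b) := by
  classical
  constructor
  · rintro ⟨v, hvpos, hv⟩ a b hab
    set T : Finset (Fin d) := Finset.univ.filter (fun b => reach E a b) with hTdef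
    have hmemT : ∀ b, b ∈ T ↔ reach E a b := by intro b; simp [hTdef]
    have haT : a ∈ T := (hmemT a).mpr Relation.ReflTransGen.refl
    have hfwd : ∀ j ∈ T, ∀ ℓ, E ℓ j → ℓ ∈ T := by
      intro j hj ℓ he
      exact (hmemT ℓ).mpr (((hmemT j).mp hj).tail he)
    have hcross : ∀ j ∈ T, ∀ ℓ ∈ Tᶜ, κ ℓ j = 0 := by
      intro j hj ℓ hℓ
      refine (hκ ℓ j).2 fun he => ?_
      exact (Finset.mem_compl.mp hℓ) (hfwd j hj ℓ he)
    have hkey := key hirr hκ v hv T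
    have hRHS0 : ∑ j ∈ T, v j * ∑ ℓ ∈ Tᶜ, κ ℓ j = 0 :=
      Finset.sum_eq_zero fun j hj => by
        rw [Finset.sum_eq_zero fun ℓ hℓ => hcross j hj ℓ hℓ, mul_zero]
    rw [hRHS0] at hkey
    have hnoin : ∀ j ∈ Tᶜ, ∀ i ∈ T, κ i j = 0 := by
      intro j hj i hi
      have hterm := (Finset.sum_eq_zero_iff_of_nonneg
        (fun j _ => mul_nonneg (le_of_lt (hvpos j))
          (Finset.sum_nonneg fun i _ => knonneg hκ i j))).mp hkey j hj
      have hsum : ∑ i ∈ T, κ i j = 0 := by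
        rcases mul_eq_zero.mp hterm with h' | h'
        · exact absurd h' (ne_of_gt (hvpos j))
        · exact h'
      exact (Finset.sum_eq_zero_iff_of_nonneg
        (fun i _ => knonneg hκ i j)).mp hsum i hi
    suffices hb : b ∈ T from (hmemT b).mp hb
    induction hab with
    | refl => exact haT
    | @tail c b' _ hstep ih =>
        rcases hstep with he | he
        · exact hfwd c ih b' he
        · by_contra hb'
          have := hnoin b' (Finset.mem_compl.mpr hb') c ih
          exact absurd this (ne_of_gt ((hκ c b').1 he))
  · intro h
    choose w hw1 hw2 hw3 using component_vec hirr hκ h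
    refine ⟨fun i => ∑ a, w a i, ?_, ?_⟩
    · intro i
      exact Finset.sum_pos' (fun a _ => hw2 a i) ⟨i, Finset.mem_univ i, hw1 i⟩
    · funext j
      show ∑ k, Lap κ j k * ∑ a, w a k = 0
      simp only [Finset.mul_sum]
      rw [Finset.sum_comm]
      refine Finset.sum_eq_zero fun a _ => ?_
      have := congrFun (hw3 a) j
      simpa [Matrix.mulVec, dotProduct] using this
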